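/- arXiv:1810.07681 — 3 statements merged into one kernel-verified Lean document; each statement's English description precedes it below -/
import Mathlib

section
/- The function u*(t,x) = (1/t) · U(|x|/t) with U(ρ) = 2√(2(d−1)(d−4)) / (d−4+3ρ²) satisfies the focusing cubic wave equation ∂²_t u − Δ_x u = u³ on (0,∞) × ℝ^d for every dimension d ≥ 5. -/
private lemma tlem (c A S : ℝ) (hA : 0 < A) (hS : 0 ≤ S) (t : ℝ) (ht : 0 < t) :
    deriv (deriv (fun s => c*s/(A*s^2+3*S))) t
      = -2*A*t*c*(9*S - A*t^2)/(A*t^2+3*S)^3 := by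
  have hden : ∀ s : ℝ, 0 < s → (0:ℝ) < A*s^2+3*S := fun s hs => by positivity
  have hd1 : ∀ s : ℝ, HasDerivAt (fun s : ℝ => A*s^2+3*S) (A*(2*s)) s := fun s => by
    simpa using (((hasDerivAt_pow 2 s).const_mul A).add_const (3*S))
  have hg : ∀ s : ℝ, 0 < s → HasDerivAt (fun s => c*s/(A*s^2+3*S))
      (c*(3*S - A*s^2)/(A*s^2+3*S)^2) s := by
    intro s hs
    have h : HasDerivAt (fun s => c*s/(A*s^2+3*S)) _ s := (((hasDerivAt_id s).const_mul c).div (hd1 s) (ne_of_gt (hden s hs)))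
    convert h using 1
    field_simp
    simp only [id]
    ring
  have heq : deriv (fun s => c*s/(A*s^2+3*S)) =ᶠ[nhds t]
      (fun s => c*(3*S - A*s^2)/(A*s^2+3*S)^2) := by
    filter_upwards [eventually_gt_nhds ht] with s hs
    exact (hg s hs).deriv
  rw [heq.deriv_eq]
  have h2 : HasDerivAt (fun s => c*(3*S - A*s^2)/(A*s^2+3*S)^2)
      ((c*(-(A*(2*t)))*(A*t^2+3*S)^2 - c*(3*S-A*t^2)*((2:ℕ)*(A*t^2+3*S)^(2-1)*(A*(2*t))))/((A*t^2+3*S)^2)^2) t := by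
    have hn : HasDerivAt (fun s : ℝ => c*(3*S - A*s^2)) (c*(-(A*(2*t)))) t := by
      simpa using ((((hasDerivAt_pow 2 t).const_mul A).const_sub (3*S)).const_mul c)
    exact hn.div ((hd1 t).pow 2) (by positivity)
  rw [h2.deriv]
  have hD : (0:ℝ) < A*t^2+3*S := hden t ht
  field_simp
  ring

private lemma xlem (c K b : ℝ) (hK : ∀ s : ℝ, 0 < K + 6*b*s + 3*s^2) :
    deriv (deriv (fun s => c/(K + 6*b*s + 3*s^2))) 0
      = -c*(6*K - 72*b^2)/K^3 := by
  have hd1 : ∀ s : ℝ, HasDerivAt (fun s : ℝ => K + 6*b*s + 3*s^2) (6*b + 3*(2*s)) s := fun s => by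
    simpa [Pi.add_def] using ((((hasDerivAt_id s).const_mul (6*b)).const_add K).add
      ((hasDerivAt_pow 2 s).const_mul 3))
  have heq : deriv (fun s => c/(K + 6*b*s + 3*s^2))
      = fun s => -(c*(6*b + 6*s))/(K + 6*b*s + 3*s^2)^2 := by
    funext s
    have h : HasDerivAt (fun s => c / (K + 6*b*s + 3*s^2)) _ s := ((hasDerivAt_const s c).div (hd1 s) (ne_of_gt (hK s)))
    rw [h.deriv]
    field_simp
    ring
  rw [heq]
  have h2 : HasDerivAt (fun s => -(c*(6*b + 6*s))/(K + 6*b*s + 3*s^2)^2)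
      ((-(c*6)*(K + 6*b*0 + 3*0^2)^2 - -(c*(6*b+6*0))*((2:ℕ)*(K + 6*b*0 + 3*0^2)^(2-1)*(6*b + 3*(2*0))))/((K + 6*b*0 + 3*0^2)^2)^2) 0 := by
    have hn : HasDerivAt (fun s : ℝ => -(c*(6*b + 6*s))) (-(c*6)) 0 := by
      simpa [Pi.neg_def] using ((((hasDerivAt_id (0:ℝ)).const_mul 6).const_add (6*b)).const_mul c).neg
    exact hn.div ((hd1 0).pow 2) (ne_of_gt (pow_pos (hK 0) 2))
  rw [h2.deriv]
  have hKp : 0 < K := by nlinarith [hK 0]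
  norm_num
  field_simp
  ring

theorem stmt0 (d : ℕ) (hd : 5 ≤ d)
    (U : ℝ → ℝ)
    (hU : U = fun ρ => 2 * Real.sqrt (2 * ((d : ℝ) - 1) * ((d : ℝ) - 4)) /
        ((d : ℝ) - 4 + 3 * ρ ^ 2))
    (u : ℝ → EuclideanSpace ℝ (Fin d) → ℝ)
    (hu : u = fun t x => (1 / t) * U (‖x‖ / t)) :
    ∀ t : ℝ, 0 < t → ∀ x : EuclideanSpace ℝ (Fin d),
      deriv (deriv (fun s => u s x)) t
        - ∑ i : Fin d,
            deriv (deriv (fun s : ℝ => u t (x + s • EuclideanSpace.single i (1 : ℝ)))) 0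
        = (u t x) ^ 3 := by
  intro t ht x
  have hd5 : (5:ℝ) ≤ (d:ℝ) := by exact_mod_cast hd
  set c : ℝ := 2 * Real.sqrt (2 * ((d : ℝ) - 1) * ((d : ℝ) - 4)) with hc
  set A : ℝ := (d : ℝ) - 4 with hAdef
  have hA : 0 < A := by simp only [hAdef]; linarith
  have hc2 : c^2 = 8*((d:ℝ)-1)*A := by
    rw [hc, mul_pow, Real.sq_sqrt (by nlinarith)]
    ring
  set S : ℝ := ‖x‖^2 with hSdef
  have hS : 0 ≤ S := by positivity
  set K : ℝ := A*t^2 + 3*S with hKdef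
  have hKpos : 0 < K := by positivity
  -- value of u
  have huval : ∀ s : ℝ, ∀ y : EuclideanSpace ℝ (Fin d), u s y = c*s/(A*s^2+3*‖y‖^2) := by
    intro s y
    rw [hu]
    simp only
    rcases eq_or_ne s 0 with rfl | hs
    · simp
    · have h1 : A + 3*(‖y‖/s)^2 ≠ 0 := by positivity
      have h2 : A*s^2+3*‖y‖^2 ≠ 0 := by positivity
      rw [hU]
      simp only
      field_simp
  -- time derivative
  have htime : (fun s => u s x) = fun s => c*s/(A*s^2+3*S) := by
    funext s; rw [huval, hSdef]
  rw [htime, tlem c A S hA hS t ht]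
  -- norm identity
  have hnorm : ∀ (i : Fin d) (s : ℝ),
      ‖x + s • EuclideanSpace.single i (1:ℝ)‖^2 = S + 2*(s * x i) + s^2 := by
    intro i s
    rw [norm_add_sq_real, hSdef]
    congr 1
    · congr 1
      rw [real_inner_smul_right, EuclideanSpace.inner_single_right]
      simp [mul_comm]
    · rw [norm_smul, EuclideanSpace.norm_single]
      simp [mul_pow, sq_abs]
  -- spatial derivatives
  have hspace : ∀ i : Fin d,
      deriv (deriv (fun s : ℝ => u t (x + s • EuclideanSpace.single i (1 : ℝ)))) 0
        = -(c*t)*(6*K - 72*(x i)^2)/K^3 := by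
    intro i
    have hKs : ∀ s : ℝ, 0 < K + 6*(x i)*s + 3*s^2 := by
      intro s
      have : K + 6*(x i)*s + 3*s^2
          = A*t^2 + 3*‖x + s • EuclideanSpace.single i (1:ℝ)‖^2 := by
        rw [hnorm i s, hKdef]; ring
      rw [this]; positivity
    have hfun : (fun s : ℝ => u t (x + s • EuclideanSpace.single i (1 : ℝ)))
        = fun s => (c*t)/(K + 6*(x i)*s + 3*s^2) := by
      funext s
      rw [huval, hnorm i s]
      rw [hKdef]
      ring_nf
    rw [hfun]
    exact xlem (c*t) K (x i) hKs
  rw [Finset.sum_congr rfl (fun i _ => hspace i)]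
  have hsumsq : ∑ i : Fin d, (x i)^2 = S := by
    rw [hSdef, EuclideanSpace.norm_eq, Real.sq_sqrt (by positivity)]
    simp [sq_abs]
  have hsum : ∑ i : Fin d, -(c*t)*(6*K - 72*(x i)^2)/K^3
      = -(c*t)*((d:ℝ)*(6*K) - 72*S)/K^3 := by
    rw [← Finset.sum_div, ← Finset.mul_sum, Finset.sum_sub_distrib, Finset.sum_const,
      Finset.card_univ, ← Finset.mul_sum, hsumsq]
    simp [nsmul_eq_mul]
  rw [hsum, huval t x, ← hSdef, ← hKdef]
  rw [div_pow, div_sub_div_same, div_eq_div_iff (by positivity) (by positivity)]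
  linear_combination (-(c*t^3)) * K^3 * hc2
end

section
/- Let f(ρ) = 1/(1+ρ²)². Then f satisfies (1−ρ²) f''(ρ) + (6/ρ − 10ρ) f'(ρ) − (20 − 48/(1+ρ²)²) f(ρ) = 0 for ρ ∈ (0,1]. -/
lemma denom_ne (ρ : ℝ) : (1 + ρ ^ 2) ≠ 0 := by positivity

lemma d1 : deriv (fun ρ : ℝ => 1 / (1 + ρ ^ 2) ^ 2)
    = fun ρ : ℝ => -4 * ρ / (1 + ρ ^ 2) ^ 3 := by
  funext x
  have h : HasDerivAt (fun ρ : ℝ => 1 / (1 + ρ ^ 2) ^ 2)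
      (-4 * x / (1 + x ^ 2) ^ 3) x := by
    have hb : HasDerivAt (fun ρ : ℝ => (1 + ρ ^ 2) ^ 2)
        (2 * (1 + x ^ 2) * (2 * x)) x := by
      have : HasDerivAt (fun ρ : ℝ => 1 + ρ ^ 2) (2 * x) x := by
        simpa using ((hasDerivAt_pow 2 x).const_add 1)
      simpa [mul_comm] using (this.fun_pow 2).congr_deriv (by ring)
    have hne : ((1 + x ^ 2) ^ 2 : ℝ) ≠ 0 := pow_ne_zero _ (denom_ne x)
    have := hb.fun_inv hne
    have h2 : HasDerivAt (fun ρ : ℝ => ((1 + ρ ^ 2) ^ 2)⁻¹)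
        (-4 * x / (1 + x ^ 2) ^ 3) x := by
      refine this.congr_deriv ?_
      field_simp
      ring
    simpa [one_div] using h2
  exact h.deriv

lemma d2 : deriv (fun ρ : ℝ => -4 * ρ / (1 + ρ ^ 2) ^ 3)
    = fun ρ : ℝ => (-4 * (1 + ρ ^ 2) + 24 * ρ ^ 2) / (1 + ρ ^ 2) ^ 4 := by
  funext x
  have hne : ((1 + x ^ 2) ^ 3 : ℝ) ≠ 0 := pow_ne_zero _ (denom_ne x)
  have hnum : HasDerivAt (fun ρ : ℝ => -4 * ρ) (-4) x := by
    simpa using (hasDerivAt_id x).const_mul (-4 : ℝ)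
  have hden : HasDerivAt (fun ρ : ℝ => (1 + ρ ^ 2) ^ 3)
      (3 * (1 + x ^ 2) ^ 2 * (2 * x)) x := by
    have : HasDerivAt (fun ρ : ℝ => 1 + ρ ^ 2) (2 * x) x := by
      simpa using ((hasDerivAt_pow 2 x).const_add 1)
    simpa [mul_comm] using (this.fun_pow 3).congr_deriv (by ring)
  have h := hnum.fun_div hden hne
  have h2 : HasDerivAt (fun ρ : ℝ => -4 * ρ / (1 + ρ ^ 2) ^ 3)
      ((-4 * (1 + x ^ 2) + 24 * x ^ 2) / (1 + x ^ 2) ^ 4) x := by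
    refine h.congr_deriv ?_
    field_simp
    ring
  exact h2.deriv

theorem stmt6 (f : ℝ → ℝ) (hf : f = fun ρ => 1 / (1 + ρ ^ 2) ^ 2) :
    ∀ ρ : ℝ, 0 < ρ → ρ ≤ 1 →
      (1 - ρ ^ 2) * deriv (deriv f) ρ + (6 / ρ - 10 * ρ) * deriv f ρ
        - (20 - 48 / (1 + ρ ^ 2) ^ 2) * f ρ = 0 := by
  intro ρ hρ _
  subst hf
  rw [d1, d2]
  have h1 : (1 + ρ ^ 2 : ℝ) ≠ 0 := denom_ne ρ
  have h2 : ρ ≠ 0 := ne_of_gt hρ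
  field_simp
  ring
end

section
/- For real t and integers n ≥ 1, the rational function C_n(it) = −4(n+1)(2n+13)[(it)² + 2(2n+5)(it) + 4(n+3)(n+2)] / ([(it)² + 4(2n+7)(it) + 4(2n+11)(n+2)]·[(it)² + 4(2n+5)(it) + 4(2n+9)(n+1)]) satisfies |C_n(it)| ≤ 1/2. -/
open Complex

lemma keylemma12 (m s : ℝ) (hm : 0 ≤ m) (hs : 0 ≤ s) :
    4 * (16 * (m + 2) ^ 2 * (2 * m + 15) ^ 2 *
        ((4 * (m + 4) * (m + 3) - s) ^ 2 + 4 * (2 * m + 7) ^ 2 * s)) ≤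
      ((4 * (2 * m + 13) * (m + 3) - s) ^ 2 + 16 * (2 * m + 9) ^ 2 * s) *
        ((4 * (2 * m + 11) * (m + 2) - s) ^ 2 + 16 * (2 * m + 7) ^ 2 * s) := by
  have h1 : (0:ℝ) ≤ 1592 + 752 * m + 96 * m ^ 2 := by nlinarith [sq_nonneg m]
  have h2 : (0:ℝ) ≤ 572752 + 541856 * m + 197984 * m ^ 2 + 33408 * m ^ 3 + 2176 * m ^ 4 := by
    nlinarith [sq_nonneg m, pow_nonneg hm 3, pow_nonneg hm 4]
  have h3 : (0:ℝ) ≤ 16656384 + 25552000 * m + 16127104 * m ^ 2 + 5371648 * m ^ 3 +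
      1000960 * m ^ 4 + 99328 * m ^ 5 + 4096 * m ^ 6 := by
    nlinarith [sq_nonneg m, pow_nonneg hm 3, pow_nonneg hm 4, pow_nonneg hm 5, pow_nonneg hm 6]
  have h4 : (0:ℝ) ≤ 55747584 + 117685248 * m + 102012160 * m ^ 2 + 46807552 * m ^ 3 +
      12199168 * m ^ 4 + 1792000 * m ^ 5 + 136192 * m ^ 6 + 4096 * m ^ 7 := by
    nlinarith [sq_nonneg m, pow_nonneg hm 3, pow_nonneg hm 4, pow_nonneg hm 5, pow_nonneg hm 6,
      pow_nonneg hm 7]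
  have hident :
      ((4 * (2 * m + 13) * (m + 3) - s) ^ 2 + 16 * (2 * m + 9) ^ 2 * s) *
          ((4 * (2 * m + 11) * (m + 2) - s) ^ 2 + 16 * (2 * m + 7) ^ 2 * s) -
        4 * (16 * (m + 2) ^ 2 * (2 * m + 15) ^ 2 *
          ((4 * (m + 4) * (m + 3) - s) ^ 2 + 4 * (2 * m + 7) ^ 2 * s)) =
      s ^ 4 + s ^ 3 * (1592 + 752 * m + 96 * m ^ 2) +
        s ^ 2 * (572752 + 541856 * m + 197984 * m ^ 2 + 33408 * m ^ 3 + 2176 * m ^ 4) +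
        s * (16656384 + 25552000 * m + 16127104 * m ^ 2 + 5371648 * m ^ 3 +
          1000960 * m ^ 4 + 99328 * m ^ 5 + 4096 * m ^ 6) +
        (55747584 + 117685248 * m + 102012160 * m ^ 2 + 46807552 * m ^ 3 +
          12199168 * m ^ 4 + 1792000 * m ^ 5 + 136192 * m ^ 6 + 4096 * m ^ 7) := by
    ring
  nlinarith [mul_nonneg (pow_nonneg hs 4) (le_refl (0:ℝ)), pow_nonneg hs 4,
    mul_nonneg (pow_nonneg hs 3) h1, mul_nonneg (pow_nonneg hs 2) h2, mul_nonneg hs h3]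

theorem stmt12 (n : ℕ) (hn : 1 ≤ n) (t : ℝ) :
    ‖
      ((-4 * ((n : ℂ) + 1) * (2 * (n : ℂ) + 13) *
          ((Complex.I * (t : ℂ)) ^ 2 + 2 * (2 * (n : ℂ) + 5) * (Complex.I * (t : ℂ)) +
            4 * ((n : ℂ) + 3) * ((n : ℂ) + 2))) /
        (((Complex.I * (t : ℂ)) ^ 2 + 4 * (2 * (n : ℂ) + 7) * (Complex.I * (t : ℂ)) +
            4 * (2 * (n : ℂ) + 11) * ((n : ℂ) + 2)) *
          ((Complex.I * (t : ℂ)) ^ 2 + 4 * (2 * (n : ℂ) + 5) * (Complex.I * (t : ℂ)) +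
            4 * (2 * (n : ℂ) + 9) * ((n : ℂ) + 1))))‖ ≤ 1 / 2 := by
  have hx1 : (1:ℝ) ≤ (n:ℝ) := by exact_mod_cast hn
  set x : ℝ := (n:ℝ) with hxdef
  have hcast : (n:ℂ) = ((x:ℝ):ℂ) := by simp [hxdef]
  rw [hcast]
  have hnum : (-4 * ((x:ℂ) + 1) * (2 * (x:ℂ) + 13) *
      ((Complex.I * (t:ℂ)) ^ 2 + 2 * (2 * (x:ℂ) + 5) * (Complex.I * (t:ℂ)) +
        4 * ((x:ℂ) + 3) * ((x:ℂ) + 2)))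
      = ((-4 * (x+1) * (2*x+13) * (4*(x+3)*(x+2) - t^2) : ℝ) : ℂ)
        + ((-4 * (x+1) * (2*x+13) * (2*(2*x+5)*t) : ℝ) : ℂ) * Complex.I := by
    rw [mul_pow, Complex.I_sq]; push_cast; ring
  have hd1 : ((Complex.I * (t:ℂ)) ^ 2 + 4 * (2 * (x:ℂ) + 7) * (Complex.I * (t:ℂ)) +
        4 * (2 * (x:ℂ) + 11) * ((x:ℂ) + 2))
      = ((4*(2*x+11)*(x+2) - t^2 : ℝ) : ℂ) + ((4*(2*x+7)*t : ℝ) : ℂ) * Complex.I := by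
    rw [mul_pow, Complex.I_sq]; push_cast; ring
  have hd2 : ((Complex.I * (t:ℂ)) ^ 2 + 4 * (2 * (x:ℂ) + 5) * (Complex.I * (t:ℂ)) +
        4 * (2 * (x:ℂ) + 9) * ((x:ℂ) + 1))
      = ((4*(2*x+9)*(x+1) - t^2 : ℝ) : ℂ) + ((4*(2*x+5)*t : ℝ) : ℂ) * Complex.I := by
    rw [mul_pow, Complex.I_sq]; push_cast; ring
  rw [hnum, hd1, hd2, norm_div, norm_mul]
  have hD1ne : (((4*(2*x+11)*(x+2) - t^2 : ℝ) : ℂ) + ((4*(2*x+7)*t : ℝ) : ℂ) * Complex.I) ≠ 0 := by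
    intro h
    rw [Complex.ext_iff] at h
    simp only [Complex.add_re, Complex.ofReal_re, Complex.mul_re, Complex.I_re, Complex.I_im,
      Complex.ofReal_im, Complex.add_im, Complex.mul_im, Complex.zero_re, Complex.zero_im] at h
    obtain ⟨hre, him⟩ := h
    have him' : (4*(2*x+7)) * t = 0 := by linarith
    rcases mul_eq_zero.mp him' with h' | h'
    · linarith
    · rw [h'] at hre; nlinarith
  have hD2ne : (((4*(2*x+9)*(x+1) - t^2 : ℝ) : ℂ) + ((4*(2*x+5)*t : ℝ) : ℂ) * Complex.I) ≠ 0 := by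
    intro h
    rw [Complex.ext_iff] at h
    simp only [Complex.add_re, Complex.ofReal_re, Complex.mul_re, Complex.I_re, Complex.I_im,
      Complex.ofReal_im, Complex.add_im, Complex.mul_im, Complex.zero_re, Complex.zero_im] at h
    obtain ⟨hre, him⟩ := h
    have him' : (4*(2*x+5)) * t = 0 := by linarith
    rcases mul_eq_zero.mp him' with h' | h'
    · linarith
    · rw [h'] at hre; nlinarith
  have hpos : 0 < ‖((4*(2*x+11)*(x+2) - t^2 : ℝ) : ℂ) + ((4*(2*x+7)*t : ℝ) : ℂ) * Complex.I‖
      * ‖((4*(2*x+9)*(x+1) - t^2 : ℝ) : ℂ) + ((4*(2*x+5)*t : ℝ) : ℂ) * Complex.I‖ :=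
    mul_pos (norm_pos_iff.mpr hD1ne) (norm_pos_iff.mpr hD2ne)
  rw [div_le_iff₀ hpos]
  have key : (‖((-4 * (x+1) * (2*x+13) * (4*(x+3)*(x+2) - t^2) : ℝ) : ℂ)
        + ((-4 * (x+1) * (2*x+13) * (2*(2*x+5)*t) : ℝ) : ℂ) * Complex.I‖) ^ 2
      ≤ (1 / 2 * (‖((4*(2*x+11)*(x+2) - t^2 : ℝ) : ℂ) + ((4*(2*x+7)*t : ℝ) : ℂ) * Complex.I‖
          * ‖((4*(2*x+9)*(x+1) - t^2 : ℝ) : ℂ) + ((4*(2*x+5)*t : ℝ) : ℂ) * Complex.I‖)) ^ 2 := by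
    rw [mul_pow, mul_pow, Complex.sq_norm, Complex.sq_norm, Complex.sq_norm,
      Complex.normSq_add_mul_I, Complex.normSq_add_mul_I, Complex.normSq_add_mul_I]
    have hkey := keylemma12 (x - 1) (t^2) (by linarith) (sq_nonneg t)
    nlinarith [hkey]
  calc ‖((-4 * (x+1) * (2*x+13) * (4*(x+3)*(x+2) - t^2) : ℝ) : ℂ)
        + ((-4 * (x+1) * (2*x+13) * (2*(2*x+5)*t) : ℝ) : ℂ) * Complex.I‖
      = Real.sqrt ((‖((-4 * (x+1) * (2*x+13) * (4*(x+3)*(x+2) - t^2) : ℝ) : ℂ)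
        + ((-4 * (x+1) * (2*x+13) * (2*(2*x+5)*t) : ℝ) : ℂ) * Complex.I‖) ^ 2) :=
        (Real.sqrt_sq (norm_nonneg _)).symm
    _ ≤ Real.sqrt ((1 / 2 * (‖((4*(2*x+11)*(x+2) - t^2 : ℝ) : ℂ) + ((4*(2*x+7)*t : ℝ) : ℂ) * Complex.I‖
          * ‖((4*(2*x+9)*(x+1) - t^2 : ℝ) : ℂ) + ((4*(2*x+5)*t : ℝ) : ℂ) * Complex.I‖)) ^ 2) :=
        Real.sqrt_le_sqrt key
    _ = _ := Real.sqrt_sq (by positivity)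
end
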